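/- arXiv:2208.00743 — 2 statements merged into one kernel-verified Lean document; each statement's English description precedes it below -/
import Mathlib

section
/- For every integer n ≥ 3, the edges of Γ_n fall into exactly three types with the following reciprocal-status sums and counts: there are exactly 2^{n-1} − 1 edges {0,u} with 1 ≤ u ≤ 2^{n-1} − 1, and for each such edge rs(0) + rs(u) = (2^{n+2} − 2^{n-1} − 4)/2; there are exactly 2^{n-1} edges {0,w} with w ≥ 2^{n-1}, and for each such edge rs(0) + rs(w) = 2^n + 2^{n-1} − 1; and there are exactly (2^{n-1}−1)(2^{n-1}−2)/2 edges {u,u'} with 1 ≤ u < u' ≤ 2^{n-1} − 1, and for each such edge rs(u) + rs(u') = 2^n + 2^{n-1} − 2. -/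
open Finset

/-- The graph Γ_n: distinct vertices u, v ∈ {0,…,2^n−1} are adjacent iff
(u < 2^(n-1) and v < 2^(n-1)), or u = 0, or v = 0. -/
def Gamma (n : ℕ) : SimpleGraph (Fin (2 ^ n)) :=
  SimpleGraph.fromRel
    (fun u v => (u.val < 2 ^ (n - 1) ∧ v.val < 2 ^ (n - 1)) ∨ u.val = 0 ∨ v.val = 0)

open Classical in
/-- The reciprocal status of a vertex v: rs(v) = Σ_{u ≠ v} 1/d(u,v). -/
noncomputable def rs (n : ℕ) (v : Fin (2 ^ n)) : ℝ :=
  ∑ u ∈ univ.filter (fun u : Fin (2 ^ n) => u ≠ v), (1 : ℝ) / ((Gamma n).dist u v)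

lemma gamma_adj_iff (n : ℕ) (u v : Fin (2 ^ n)) :
    (Gamma n).Adj u v ↔ u ≠ v ∧
      ((u.val < 2 ^ (n-1) ∧ v.val < 2 ^ (n-1)) ∨ u.val = 0 ∨ v.val = 0) := by
  simp only [Gamma, SimpleGraph.fromRel_adj]
  tauto

lemma card_val_filter (N : ℕ) (p : ℕ → Prop) [DecidablePred p] :
    ((univ : Finset (Fin N)).filter (fun u => p u.val)).card
      = ((range N).filter p).card := by
  apply Finset.card_nbij (i := Fin.val)
  · intro a ha; simp_all [Fin.is_lt]
  · intro a _ b _ h; exact Fin.val_injective h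
  · intro k hk
    simp only [coe_filter, Set.mem_setOf_eq, mem_range, mem_coe, mem_univ, true_and] at hk ⊢
    exact ⟨⟨k, hk.1⟩, hk.2, rfl⟩

lemma gamma_dist_two (n : ℕ) (u v : Fin (2 ^ n)) (huv : u ≠ v)
    (hadj : ¬ (Gamma n).Adj u v) (hu : u.val ≠ 0) (hv : v.val ≠ 0) :
    (Gamma n).dist u v = 2 := by
  have hz : (⟨0, Nat.two_pow_pos n⟩ : Fin (2^n)).val = 0 := rfl
  have h1 : (Gamma n).Adj u ⟨0, Nat.two_pow_pos n⟩ := by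
    rw [gamma_adj_iff]
    exact ⟨fun h => hu (by rw [h]), Or.inr (Or.inr rfl)⟩
  have h2 : (Gamma n).Adj (⟨0, Nat.two_pow_pos n⟩ : Fin (2^n)) v := by
    rw [gamma_adj_iff]
    exact ⟨fun h => hv (by rw [← h]), Or.inr (Or.inl rfl)⟩
  have hle : (Gamma n).dist u v ≤ 2 := by
    have := SimpleGraph.dist_le (SimpleGraph.Walk.cons h1 (SimpleGraph.Walk.cons h2 SimpleGraph.Walk.nil))
    exact this
  have hne0 : (Gamma n).dist u v ≠ 0 := by
    intro h
    rcases SimpleGraph.dist_eq_zero_iff_eq_or_not_reachable.mp h with h' | h'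
    · exact huv h'
    · exact h' ⟨SimpleGraph.Walk.cons h1 (SimpleGraph.Walk.cons h2 SimpleGraph.Walk.nil)⟩
  have hne1 : (Gamma n).dist u v ≠ 1 := by
    intro h
    exact hadj (SimpleGraph.dist_eq_one_iff_adj.mp h)
  omega

lemma val_ne_zero_iff (n : ℕ) (u : Fin (2^n)) :
    u ≠ ⟨0, Nat.two_pow_pos n⟩ ↔ u.val ≠ 0 := by
  constructor
  · intro h h'; exact h (Fin.ext h')
  · intro h h'; exact h (by rw [h'])

lemma rs_zero (n : ℕ) : rs n ⟨0, Nat.two_pow_pos n⟩ = 2 ^ n - 1 := by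
  classical
  rw [rs]
  have h1 : ∀ u ∈ univ.filter (fun u : Fin (2^n) => u ≠ ⟨0, Nat.two_pow_pos n⟩),
      (1 : ℝ) / ((Gamma n).dist u ⟨0, Nat.two_pow_pos n⟩) = 1 := by
    intro u hu
    simp only [mem_filter] at hu
    have hadj : (Gamma n).Adj u ⟨0, Nat.two_pow_pos n⟩ := by
      rw [gamma_adj_iff]
      exact ⟨hu.2, Or.inr (Or.inr rfl)⟩
    rw [SimpleGraph.dist_eq_one_iff_adj.mpr hadj]
    norm_num
  rw [Finset.sum_congr rfl h1, Finset.sum_const, Finset.filter_ne', Finset.card_erase_of_mem (mem_univ _)]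
  simp only [card_univ, Fintype.card_fin, nsmul_eq_mul, mul_one]
  have : 1 ≤ 2^n := Nat.one_le_two_pow
  push_cast [this]
  ring

lemma rs_mid (n : ℕ) (hn : 1 ≤ n) (u : Fin (2^n)) (h1 : 1 ≤ u.val)
    (h2 : u.val < 2 ^ (n-1)) :
    rs n u = (2 ^ (n-1) - 1) + 2 ^ (n-1) / 2 := by
  classical
  have hN : 2 ^ n = 2 * 2 ^ (n-1) := by
    rw [← pow_succ']
    congr 1
    omega
  rw [rs, ← Finset.sum_filter_add_sum_filter_not
    (univ.filter (fun x : Fin (2^n) => x ≠ u)) (fun x => x.val < 2 ^ (n-1))]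
  rw [Finset.filter_filter, Finset.filter_filter]
  have e1 : (univ.filter (fun x : Fin (2^n) => x ≠ u ∧ x.val < 2^(n-1)))
      = (univ.filter (fun x : Fin (2^n) => x.val < 2^(n-1))).erase u := by
    ext x
    simp only [mem_filter, mem_erase, mem_univ, true_and]
    try tauto
  have e2 : (univ.filter (fun x : Fin (2^n) => x ≠ u ∧ ¬ x.val < 2^(n-1)))
      = univ.filter (fun x : Fin (2^n) => ¬ x.val < 2^(n-1)) := by
    ext x
    simp only [mem_filter, mem_univ, true_and, and_iff_right_iff_imp]
    intro hx h'
    rw [h'] at hx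
    exact hx h2
  rw [e1, e2]
  have c1 : ((univ.filter (fun x : Fin (2^n) => x.val < 2^(n-1))).erase u).card
      = 2^(n-1) - 1 := by
    rw [Finset.card_erase_of_mem (by simp [h2]),
      card_val_filter (2^n) (fun k => k < 2^(n-1))]
    have : (range (2^n)).filter (fun k => k < 2^(n-1)) = range (2^(n-1)) := by
      ext k; simp only [mem_filter, mem_range]; omega
    rw [this, Finset.card_range]
  have c2 : (univ.filter (fun x : Fin (2^n) => ¬ x.val < 2^(n-1))).card = 2^(n-1) := by
    rw [card_val_filter (2^n) (fun k => ¬ k < 2^(n-1))]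
    have : (range (2^n)).filter (fun k => ¬ k < 2^(n-1)) = Ico (2^(n-1)) (2^n) := by
      ext k; simp only [mem_filter, mem_range, mem_Ico]; omega
    rw [this, Nat.card_Ico]
    omega
  have s1 : ∀ x ∈ (univ.filter (fun x : Fin (2^n) => x.val < 2^(n-1))).erase u,
      (1:ℝ) / ((Gamma n).dist x u) = 1 := by
    intro x hx
    simp only [mem_erase, mem_filter, mem_univ, true_and] at hx
    have : (Gamma n).Adj x u := by
      rw [gamma_adj_iff]
      exact ⟨hx.1, Or.inl ⟨hx.2, h2⟩⟩
    rw [SimpleGraph.dist_eq_one_iff_adj.mpr this]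
    norm_num
  have s2 : ∀ x ∈ univ.filter (fun x : Fin (2^n) => ¬ x.val < 2^(n-1)),
      (1:ℝ) / ((Gamma n).dist x u) = 1/2 := by
    intro x hx
    simp only [mem_filter, mem_univ, true_and] at hx
    have hm1 : 1 ≤ 2^(n-1) := Nat.one_le_two_pow
    have hxu : x ≠ u := by
      intro h; rw [h] at hx; exact hx h2
    have hnadj : ¬ (Gamma n).Adj x u := by
      rw [gamma_adj_iff]
      rintro ⟨-, ⟨hc1, hc2⟩ | hc | hc⟩ <;> omega
    rw [gamma_dist_two n x u hxu hnadj (by omega) (by omega)]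
    norm_num
  rw [Finset.sum_congr rfl s1, Finset.sum_congr rfl s2, Finset.sum_const, Finset.sum_const,
    c1, c2]
  have hm1 : 1 ≤ 2^(n-1) := Nat.one_le_two_pow
  simp only [nsmul_eq_mul, mul_one]
  rw [Nat.cast_sub hm1]
  push_cast
  ring

lemma rs_high (n : ℕ) (hn : 1 ≤ n) (w : Fin (2^n)) (h : 2 ^ (n-1) ≤ w.val) :
    rs n w = 2 ^ (n-1) := by
  classical
  have hm1 : 1 ≤ 2^(n-1) := Nat.one_le_two_pow
  have hN : 2 ^ n = 2 * 2 ^ (n-1) := by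
    rw [← pow_succ']; congr 1; omega
  have hzw : (⟨0, Nat.two_pow_pos n⟩ : Fin (2^n)) ∈
      univ.filter (fun x : Fin (2^n) => x ≠ w) := by
    simp only [mem_filter, mem_univ, true_and]
    rw [Ne, Fin.ext_iff]
    simp only [Fin.val_mk]
    omega
  rw [rs, ← Finset.add_sum_erase _ _ hzw]
  have t0 : (1:ℝ) / ((Gamma n).dist ⟨0, Nat.two_pow_pos n⟩ w) = 1 := by
    have : (Gamma n).Adj ⟨0, Nat.two_pow_pos n⟩ w := by
      rw [gamma_adj_iff]
      constructor
      · rw [Ne, Fin.ext_iff]; simp only [Fin.val_mk]; omega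
      · exact Or.inr (Or.inl rfl)
    rw [SimpleGraph.dist_eq_one_iff_adj.mpr this]; norm_num
  have s2 : ∀ x ∈ ((univ.filter (fun x : Fin (2^n) => x ≠ w)).erase
      ⟨0, Nat.two_pow_pos n⟩),
      (1:ℝ) / ((Gamma n).dist x w) = 1/2 := by
    intro x hx
    simp only [mem_erase, mem_filter, mem_univ, true_and] at hx
    have hx0 : x.val ≠ 0 := (val_ne_zero_iff n x).mp hx.1
    have hnadj : ¬ (Gamma n).Adj x w := by
      rw [gamma_adj_iff]
      rintro ⟨-, ⟨hc1, hc2⟩ | hc | hc⟩ <;> omega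
    rw [gamma_dist_two n x w hx.2 hnadj hx0 (by omega)]
    norm_num
  have c2 : ((univ.filter (fun x : Fin (2^n) => x ≠ w)).erase
      (⟨0, Nat.two_pow_pos n⟩ : Fin (2^n))).card = 2^n - 2 := by
    rw [Finset.card_erase_of_mem hzw, Finset.filter_ne', Finset.card_erase_of_mem (mem_univ _)]
    simp only [card_univ, Fintype.card_fin]
    omega
  rw [t0, Finset.sum_congr rfl s2, Finset.sum_const, c2]
  simp only [nsmul_eq_mul]
  have h2N : (2:ℕ) ≤ 2^n := by omega
  rw [Nat.cast_sub h2N]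
  have hNr : (2:ℝ)^n = 2 * 2^(n-1) := by exact_mod_cast hN
  push_cast
  rw [hNr]
  ring

lemma card_pairs (N M : ℕ) (hM : M < N) :
    ((univ : Finset (Fin N × Fin N)).filter (fun p =>
      1 ≤ p.1.val ∧ p.1.val < p.2.val ∧ p.2.val ≤ M)).card = M * (M - 1) / 2 := by
  classical
  rw [Finset.card_filter, Fintype.sum_prod_type]
  have inner : ∀ a : Fin N,
      (∑ b : Fin N, if 1 ≤ a.val ∧ a.val < b.val ∧ b.val ≤ M then 1 else 0)
        = if 1 ≤ a.val ∧ a.val ≤ M then M - a.val else 0 := by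
    intro a
    rw [Fin.sum_univ_eq_sum_range
      (fun k => if 1 ≤ a.val ∧ a.val < k ∧ k ≤ M then 1 else 0) N]
    rw [← Finset.sum_filter]
    by_cases ha : 1 ≤ a.val ∧ a.val ≤ M
    · rw [if_pos ha]
      have : (range N).filter (fun k => 1 ≤ a.val ∧ a.val < k ∧ k ≤ M)
          = Ico (a.val + 1) (M + 1) := by
        ext k
        simp only [mem_filter, mem_range, mem_Ico]
        omega
      rw [this, Finset.sum_const, Nat.card_Ico, smul_eq_mul, mul_one]
      omega
    · rw [if_neg ha]
      have : (range N).filter (fun k => 1 ≤ a.val ∧ a.val < k ∧ k ≤ M) = ∅ := by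
        ext k
        simp only [mem_filter, mem_range, notMem_empty, iff_false]
        omega
      rw [this, Finset.sum_empty]
  rw [Finset.sum_congr rfl (fun a _ => inner a)]
  rw [Fin.sum_univ_eq_sum_range
    (fun k => if 1 ≤ k ∧ k ≤ M then M - k else 0) N]
  rw [← Finset.sum_filter]
  have e3 : (range N).filter (fun k => 1 ≤ k ∧ k ≤ M) = Ico 1 (M+1) := by
    ext k
    simp only [mem_filter, mem_range, mem_Ico]
    omega
  rw [e3, Finset.sum_Ico_eq_sum_range]
  have e4 : ∀ j ∈ range (M + 1 - 1), M - (1 + j) = M - 1 - j := by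
    intro j _
    omega
  rw [Finset.sum_congr rfl e4]
  have : M + 1 - 1 = M := by omega
  rw [this, Finset.sum_range_reflect (fun i => i) M, Finset.sum_range_id]


open Classical in
/-- For every n ≥ 3, the edges of Γ_n fall into three types: 2^(n-1) − 1 edges {0,u}
with 1 ≤ u ≤ 2^(n-1)−1, each with rs(0)+rs(u) = (2^(n+2) − 2^(n-1) − 4)/2;
2^(n-1) edges {0,w} with w ≥ 2^(n-1), each with rs(0)+rs(w) = 2^n + 2^(n-1) − 1;
and (2^(n-1)−1)(2^(n-1)−2)/2 edges {u,u'} with 1 ≤ u < u' ≤ 2^(n-1)−1, each with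
rs(u)+rs(u') = 2^n + 2^(n-1) − 2. -/
theorem stmt_8 (n : ℕ) (hn : 3 ≤ n) :
    ((univ.filter (fun u : Fin (2 ^ n) =>
        1 ≤ u.val ∧ u.val ≤ 2 ^ (n - 1) - 1)).card = 2 ^ (n - 1) - 1 ∧
      ∀ u : Fin (2 ^ n), 1 ≤ u.val → u.val ≤ 2 ^ (n - 1) - 1 →
        (Gamma n).Adj ⟨0, Nat.two_pow_pos n⟩ u ∧
        rs n ⟨0, Nat.two_pow_pos n⟩ + rs n u
          = (2 ^ (n + 2) - 2 ^ (n - 1) - 4) / 2) ∧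
    ((univ.filter (fun w : Fin (2 ^ n) =>
        2 ^ (n - 1) ≤ w.val)).card = 2 ^ (n - 1) ∧
      ∀ w : Fin (2 ^ n), 2 ^ (n - 1) ≤ w.val →
        (Gamma n).Adj ⟨0, Nat.two_pow_pos n⟩ w ∧
        rs n ⟨0, Nat.two_pow_pos n⟩ + rs n w = 2 ^ n + 2 ^ (n - 1) - 1) ∧
    ((univ.filter (fun p : Fin (2 ^ n) × Fin (2 ^ n) =>
        1 ≤ p.1.val ∧ p.1.val < p.2.val ∧ p.2.val ≤ 2 ^ (n - 1) - 1)).card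
        = (2 ^ (n - 1) - 1) * (2 ^ (n - 1) - 2) / 2 ∧
      ∀ u u' : Fin (2 ^ n), 1 ≤ u.val → u.val < u'.val → u'.val ≤ 2 ^ (n - 1) - 1 →
        (Gamma n).Adj u u' ∧
        rs n u + rs n u' = 2 ^ n + 2 ^ (n - 1) - 2) := by
  classical
  have hm4 : (4:ℕ) ≤ 2^(n-1) := by
    have : (2:ℕ)^2 ≤ 2^(n-1) := Nat.pow_le_pow_right (by norm_num) (by omega)
    omega
  have hN : (2:ℕ)^n = 2 * 2^(n-1) := by
    rw [← pow_succ']; congr 1; omega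
  have hn1 : 1 ≤ n := by omega
  have hp : (2:ℝ)^n = 2 * 2^(n-1) := by exact_mod_cast hN
  have hq : (2:ℝ)^(n+2) = 4 * 2^n := by rw [pow_add]; ring
  refine ⟨⟨?_, ?_⟩, ⟨?_, ?_⟩, ?_, ?_⟩
  · have h := card_val_filter (2^n) (fun k => 1 ≤ k ∧ k ≤ 2^(n-1) - 1)
    have e : (range (2^n)).filter (fun k => 1 ≤ k ∧ k ≤ 2^(n-1)-1)
        = Ico 1 (2^(n-1)) := by
      ext k; simp only [mem_filter, mem_range, mem_Ico]; omega
    rw [e, Nat.card_Ico] at h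
    convert h using 2
  · intro u hu1 hu2
    have hu2' : u.val < 2^(n-1) := by omega
    constructor
    · rw [gamma_adj_iff]
      refine ⟨?_, Or.inr (Or.inl rfl)⟩
      rw [Ne, Fin.ext_iff]
      simp only [Fin.val_mk]
      omega
    · rw [rs_zero, rs_mid n hn1 u hu1 hu2']
      linarith [hp, hq]
  · have h := card_val_filter (2^n) (fun k => 2^(n-1) ≤ k)
    have e : (range (2^n)).filter (fun k => 2^(n-1) ≤ k) = Ico (2^(n-1)) (2^n) := by
      ext k; simp only [mem_filter, mem_range, mem_Ico]; omega
    rw [e, Nat.card_Ico] at h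
    have : (2:ℕ)^n - 2^(n-1) = 2^(n-1) := by omega
    rw [this] at h
    convert h using 2
  · intro w hw
    constructor
    · rw [gamma_adj_iff]
      refine ⟨?_, Or.inr (Or.inl rfl)⟩
      rw [Ne, Fin.ext_iff]
      simp only [Fin.val_mk]
      omega
    · rw [rs_zero, rs_high n hn1 w hw]
      linarith [hp]
  · have h := card_pairs (2^n) (2^(n-1) - 1) (by omega)
    have e : (2:ℕ)^(n-1) - 1 - 1 = 2^(n-1) - 2 := by omega
    rw [e] at h
    convert h using 2
  · intro u u' h1 h2 h3
    have hu' : u'.val < 2^(n-1) := by omega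
    have hu : u.val < 2^(n-1) := by omega
    have h1' : 1 ≤ u'.val := by omega
    constructor
    · rw [gamma_adj_iff]
      refine ⟨?_, Or.inl ⟨hu, hu'⟩⟩
      rw [Ne, Fin.ext_iff]
      omega
    · rw [rs_mid n hn1 u h1 hu, rs_mid n hn1 u' h1' hu']
      linarith [hp]
end

section
/- For every integer n ≥ 3, in Γ_n the detour eccentricity of the vertex 0 is 2^{n-1} − 1, the detour eccentricity of every vertex u ≠ 0 is 2^{n-1}, and consequently the detour radius of Γ_n is 2^{n-1} − 1 and the detour diameter of Γ_n is 2^{n-1}. -/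
open Finset

/-- The detour distance between two vertices: the maximum length of a path
(a walk with no repeated vertices) between them. -/
noncomputable def detourDist {V : Type*} (G : SimpleGraph V) (u v : V) : ℕ :=
  sSup {k : ℕ | ∃ p : G.Walk u v, p.IsPath ∧ p.length = k}

/-- The detour eccentricity of a vertex u: the maximum of d_D(u,v) over all v ≠ u. -/
noncomputable def detourEcc (n : ℕ) (u : Fin (2 ^ n)) : ℕ :=
  (univ.filter (fun v : Fin (2 ^ n) => v ≠ u)).sup (detourDist (Gamma n) u)

open SimpleGraph Walk in
lemma gamma_adj {n : ℕ} {u v : Fin (2 ^ n)} :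
    (Gamma n).Adj u v ↔ u ≠ v ∧
      ((u.val < 2 ^ (n - 1) ∧ v.val < 2 ^ (n - 1)) ∨ u.val = 0 ∨ v.val = 0) := by
  simp only [Gamma, SimpleGraph.fromRel_adj]
  tauto

/-- In a path, any "high" vertex (val ≥ 2^(n-1)) is an endpoint. -/
lemma high_mem {n : ℕ} : ∀ {u v : Fin (2 ^ n)} (p : (Gamma n).Walk u v), p.IsPath →
    ∀ w ∈ p.support, 2 ^ (n - 1) ≤ w.val → w = u ∨ w = v := by
  intro u v p
  induction p with
  | nil =>
    intro _ w hw _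
    simp only [SimpleGraph.Walk.support_nil, List.mem_singleton] at hw
    exact Or.inl hw
  | @cons u b v h q ih =>
    intro hp w hw hm
    have hm1 : 0 < 2 ^ (n - 1) := Nat.pow_pos (by norm_num)
    rw [SimpleGraph.Walk.support_cons] at hw
    rw [SimpleGraph.Walk.cons_isPath_iff] at hp
    rcases List.mem_cons.mp hw with rfl | hw'
    · exact Or.inl rfl
    rcases ih hp.1 w hw' hm with rfl | rfl
    · -- w = b, the second vertex of the path; then u.val = 0
      have hu0 : u.val = 0 := by
        rcases gamma_adj.mp h with ⟨-, h'⟩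
        rcases h' with ⟨_, h2⟩ | h0 | h0 <;> omega
      cases q with
      | nil => exact Or.inr rfl
      | @cons _ y _ h2 q2 =>
        exfalso
        have hy0 : y.val = 0 := by
          rcases gamma_adj.mp h2 with ⟨-, h'⟩
          rcases h' with ⟨h1, _⟩ | h0 | h0 <;> omega
        have : y = u := Fin.ext (by rw [hy0, hu0])
        apply hp.2
        rw [← this, SimpleGraph.Walk.support_cons]
        exact List.mem_cons_of_mem _ q2.start_mem_support
    · exact Or.inr rfl

/-- A path from a high vertex to the zero vertex has length ≤ 1. -/
lemma high_to_zero {n : ℕ} {u v : Fin (2 ^ n)} (hu : 2 ^ (n - 1) ≤ u.val) (hv : v.val = 0)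
    (p : (Gamma n).Walk u v) (hp : p.IsPath) : p.length ≤ 1 := by
  cases p with
  | nil => simp
  | @cons _ b _ h q =>
    have hm1 : 0 < 2 ^ (n - 1) := Nat.pow_pos (by norm_num)
    have hb : b.val = 0 := by
      rcases gamma_adj.mp h with ⟨-, h'⟩
      rcases h' with ⟨h1, _⟩ | h0 | h0 <;> omega
    have hbv : b = v := Fin.ext (by rw [hb, hv])
    subst hbv
    rw [SimpleGraph.Walk.cons_isPath_iff] at hp
    have hq : q.length = 0 := by
      cases q with
      | nil => rfl
      | @cons _ y _ h2 q2 =>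
        exfalso
        rw [SimpleGraph.Walk.cons_isPath_iff] at hp
        exact hp.1.2 q2.end_mem_support
    simp [SimpleGraph.Walk.length_cons, hq]

/-- A path between two high vertices has length ≤ 2. -/
lemma high_to_high {n : ℕ} {u v : Fin (2 ^ n)} (hu : 2 ^ (n - 1) ≤ u.val)
    (hv : 2 ^ (n - 1) ≤ v.val) (p : (Gamma n).Walk u v) (hp : p.IsPath) : p.length ≤ 2 := by
  cases p with
  | nil => simp
  | @cons _ b _ h q =>
    have hm1 : 0 < 2 ^ (n - 1) := Nat.pow_pos (by norm_num)
    have hb : b.val = 0 := by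
      rcases gamma_adj.mp h with ⟨-, h'⟩
      rcases h' with ⟨h1, _⟩ | h0 | h0 <;> omega
    rw [SimpleGraph.Walk.cons_isPath_iff] at hp
    have : q.reverse.length ≤ 1 := high_to_zero hv hb q.reverse hp.1.reverse
    rw [SimpleGraph.Walk.length_reverse] at this
    rw [SimpleGraph.Walk.length_cons]
    omega

/-- The "low" part of the vertex set, as a finset. -/
def Pfin (n : ℕ) : Finset (Fin (2 ^ n)) := univ.filter (fun v => v.val < 2 ^ (n - 1))

lemma card_Pfin (n : ℕ) : (Pfin n).card = 2 ^ (n - 1) := by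
  have h : 2 ^ (n - 1) ≤ 2 ^ n := Nat.pow_le_pow_right (by norm_num) (Nat.sub_le n 1)
  have : Pfin n = (univ : Finset (Fin (2 ^ (n - 1)))).map (Fin.castLEEmb h) := by
    ext v
    simp only [Pfin, mem_filter, mem_univ, true_and, Finset.mem_map, Fin.castLEEmb,
      Function.Embedding.coeFn_mk]
    constructor
    · intro hv
      exact ⟨⟨v.val, hv⟩, Fin.ext rfl⟩
    · rintro ⟨i, -, rfl⟩
      simpa using i.isLt
  rw [this, Finset.card_map, Finset.card_univ, Fintype.card_fin]

lemma length_le_of_subset {V : Type*} [DecidableEq V] {G : SimpleGraph V} {u v : V}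
    {p : G.Walk u v} (hp : p.IsPath) {s : Finset V} (hs : ∀ w ∈ p.support, w ∈ s) :
    p.length + 1 ≤ s.card := by
  calc p.length + 1 = p.support.length := (SimpleGraph.Walk.length_support p).symm
    _ = p.support.toFinset.card := (List.toFinset_card_of_nodup hp.support_nodup).symm
    _ ≤ s.card := Finset.card_le_card (fun x hx => hs x (List.mem_toFinset.mp hx))

lemma bddAbove_lengths {n : ℕ} (u v : Fin (2 ^ n)) :
    BddAbove {k : ℕ | ∃ p : (Gamma n).Walk u v, p.IsPath ∧ p.length = k} := by
  refine ⟨Fintype.card (Fin (2 ^ n)), ?_⟩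
  rintro k ⟨p, hp, rfl⟩
  exact hp.length_lt.le

lemma le_detourDist {n : ℕ} {u v : Fin (2 ^ n)} (p : (Gamma n).Walk u v) (hp : p.IsPath) :
    p.length ≤ detourDist (Gamma n) u v :=
  le_csSup (bddAbove_lengths u v) ⟨p, hp, rfl⟩

lemma detourDist_le {n : ℕ} {u v : Fin (2 ^ n)} {k : ℕ}
    (h : ∀ p : (Gamma n).Walk u v, p.IsPath → p.length ≤ k) :
    detourDist (Gamma n) u v ≤ k := by
  apply csSup_le'
  rintro x ⟨p, hp, rfl⟩
  exact h p hp

/-- The straight increasing path a, a+1, …, a+k inside the clique. -/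
lemma exists_walkSeg (n : ℕ) (a : ℕ) : ∀ (k : ℕ) (h : a + k < 2 ^ (n - 1)) (ha : a < 2 ^ n)
    (hb : a + k < 2 ^ n), ∃ p : (Gamma n).Walk ⟨a, ha⟩ ⟨a + k, hb⟩, p.IsPath ∧ p.length = k ∧
      ∀ x ∈ p.support, a ≤ x.val ∧ x.val ≤ a + k := by
  intro k
  induction k with
  | zero =>
    intro h ha hb
    exact ⟨SimpleGraph.Walk.nil, by simp, rfl, by
      intro x hx
      simp only [SimpleGraph.Walk.support_nil, List.mem_singleton] at hx
      subst hx
      simp⟩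
  | succ k ih =>
    intro h ha hb
    have h' : a + k < 2 ^ (n - 1) := by omega
    have hb' : a + k < 2 ^ n := by omega
    obtain ⟨p, hp, hl, hsup⟩ := ih h' ha hb'
    have hadj : (Gamma n).Adj ⟨a + k, hb'⟩ ⟨a + (k + 1), hb⟩ := by
      refine gamma_adj.mpr ⟨?_, Or.inl ⟨h', by simpa using h⟩⟩
      simp only [ne_eq, Fin.mk.injEq]
      omega
    refine ⟨p.concat hadj, ?_, ?_, ?_⟩
    · rw [SimpleGraph.Walk.isPath_def, SimpleGraph.Walk.support_concat]
      refine List.Nodup.append hp.support_nodup (List.nodup_singleton _) ?_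
      intro x hx hx'
      simp only [List.mem_singleton] at hx'
      subst hx'
      have := (hsup _ hx).2
      simp only at this
      omega
    · simp [SimpleGraph.Walk.length_concat, hl]
    · intro x hx
      rw [SimpleGraph.Walk.support_concat, List.mem_append] at hx
      rcases hx with hx | hx
      · have := hsup x hx; omega
      · simp only [List.mem_singleton] at hx
        subst hx
        simp only
        omega

/-- Any path starting at a low vertex has length ≤ 2^(n-1). -/
lemma path_length_le {n : ℕ} {u v : Fin (2 ^ n)} (hu : u.val < 2 ^ (n - 1))
    (p : (Gamma n).Walk u v) (hp : p.IsPath) : p.length ≤ 2 ^ (n - 1) := by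
  classical
  have hsub : ∀ w ∈ p.support, w ∈ insert v (Pfin n) := by
    intro w hw
    by_cases hwm : w.val < 2 ^ (n - 1)
    · exact Finset.mem_insert_of_mem (by simp [Pfin, hwm])
    · rcases high_mem p hp w hw (le_of_not_gt hwm) with rfl | rfl
      · omega
      · exact Finset.mem_insert_self _ _
  have := length_le_of_subset hp hsub
  have hcard : (insert v (Pfin n)).card ≤ 2 ^ (n - 1) + 1 := by
    have := Finset.card_insert_le v (Pfin n)
    rw [card_Pfin] at this
    omega
  omega

/-- Any path from the zero vertex to a low vertex has length ≤ 2^(n-1) - 1. -/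
lemma path_length_le_zero {n : ℕ} {u v : Fin (2 ^ n)} (hu : u.val = 0)
    (hv : v.val < 2 ^ (n - 1)) (p : (Gamma n).Walk u v) (hp : p.IsPath) :
    p.length ≤ 2 ^ (n - 1) - 1 := by
  classical
  have hm1 : 0 < 2 ^ (n - 1) := Nat.pow_pos (by norm_num)
  have hsub : ∀ w ∈ p.support, w ∈ Pfin n := by
    intro w hw
    by_cases hwm : w.val < 2 ^ (n - 1)
    · simp [Pfin, hwm]
    · rcases high_mem p hp w hw (le_of_not_gt hwm) with rfl | rfl <;> omega
  have := length_le_of_subset hp hsub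
  rw [card_Pfin] at this
  omega


lemma ecc_zero (n : ℕ) (hn : 3 ≤ n) :
    detourEcc n ⟨0, Nat.two_pow_pos n⟩ = 2 ^ (n - 1) - 1 := by
  have hm4 : 4 ≤ 2 ^ (n - 1) := by
    calc (4 : ℕ) = 2 ^ 2 := by norm_num
      _ ≤ 2 ^ (n - 1) := Nat.pow_le_pow_right (by norm_num) (by omega)
  apply le_antisymm
  · apply Finset.sup_le
    intro v _
    by_cases hvm : v.val < 2 ^ (n - 1)
    · exact detourDist_le (fun p hp => path_length_le_zero rfl hvm p hp)
    · apply detourDist_le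
      intro p hp
      have h1 := high_to_zero (le_of_not_gt hvm) rfl p.reverse hp.reverse
      rw [SimpleGraph.Walk.length_reverse] at h1
      omega
  · have hb2 : 0 + (2 ^ (n - 1) - 1) < 2 ^ n := by
      have : 2 ^ (n - 1) ≤ 2 ^ n := Nat.pow_le_pow_right (by norm_num) (Nat.sub_le n 1)
      omega
    obtain ⟨p, hp, hl, -⟩ :=
      exists_walkSeg n 0 (2 ^ (n - 1) - 1) (by omega) (Nat.two_pow_pos n) hb2
    have hmem : (⟨0 + (2 ^ (n - 1) - 1), hb2⟩ : Fin (2 ^ n)) ∈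
        univ.filter (fun v : Fin (2 ^ n) => v ≠ ⟨0, Nat.two_pow_pos n⟩) := by
      simp only [mem_filter, mem_univ, true_and, ne_eq, Fin.mk.injEq]
      omega
    calc 2 ^ (n - 1) - 1 = p.length := hl.symm
      _ ≤ detourDist (Gamma n) ⟨0, Nat.two_pow_pos n⟩ ⟨0 + (2 ^ (n - 1) - 1), hb2⟩ :=
          le_detourDist p hp
      _ ≤ _ := Finset.le_sup hmem

lemma ecc_ne (n : ℕ) (hn : 3 ≤ n) (u : Fin (2 ^ n)) (hu : u.val ≠ 0) :
    detourEcc n u = 2 ^ (n - 1) := by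
  have hm4 : 4 ≤ 2 ^ (n - 1) := by
    calc (4 : ℕ) = 2 ^ 2 := by norm_num
      _ ≤ 2 ^ (n - 1) := Nat.pow_le_pow_right (by norm_num) (by omega)
  have hmn : 2 ^ (n - 1) < 2 ^ n := Nat.pow_lt_pow_right (by norm_num) (by omega)
  apply le_antisymm
  · apply Finset.sup_le
    intro v _
    by_cases hum : u.val < 2 ^ (n - 1)
    · exact detourDist_le (fun p hp => path_length_le hum p hp)
    · by_cases hvm : v.val < 2 ^ (n - 1)
      · apply detourDist_le
        intro p hp
        have h1 := path_length_le hvm p.reverse hp.reverse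
        rw [SimpleGraph.Walk.length_reverse] at h1
        exact h1
      · apply detourDist_le
        intro p hp
        have h1 := high_to_high (le_of_not_gt hum) (le_of_not_gt hvm) p hp
        omega
  · by_cases hum : u.val < 2 ^ (n - 1)
    · -- low nonzero vertex: path u, u+1, …, m-1, u-1, u-2, …, 0, m
      have hb1 : u.val + (2 ^ (n - 1) - 1 - u.val) < 2 ^ n := by omega
      have hb2 : 0 + (u.val - 1) < 2 ^ n := by omega
      obtain ⟨p1, hp1, hl1, hs1⟩ :=
        exists_walkSeg n u.val (2 ^ (n - 1) - 1 - u.val) (by omega) u.isLt hb1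
      obtain ⟨p2, hp2, hl2, hs2⟩ :=
        exists_walkSeg n 0 (u.val - 1) (by omega) (Nat.two_pow_pos n) hb2
      have e1 : (Gamma n).Adj ⟨u.val + (2 ^ (n - 1) - 1 - u.val), hb1⟩ ⟨0 + (u.val - 1), hb2⟩ := by
        refine gamma_adj.mpr ⟨?_, Or.inl ⟨by simp; omega, by simp; omega⟩⟩
        simp only [ne_eq, Fin.mk.injEq]
        omega
      have e2 : (Gamma n).Adj ⟨0, Nat.two_pow_pos n⟩ ⟨2 ^ (n - 1), hmn⟩ := by
        refine gamma_adj.mpr ⟨?_, Or.inr (Or.inl rfl)⟩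
        simp only [ne_eq, Fin.mk.injEq]
        omega
      set q : (Gamma n).Walk ⟨u.val, u.isLt⟩ ⟨2 ^ (n - 1), hmn⟩ :=
        (p1.append (SimpleGraph.Walk.cons e1 p2.reverse)).concat e2 with hq_def
      have hsupp : q.support = (p1.support ++ p2.reverse.support) ++ [⟨2 ^ (n - 1), hmn⟩] := by
        rw [hq_def, SimpleGraph.Walk.support_concat, SimpleGraph.Walk.support_append,
          SimpleGraph.Walk.support_cons, List.tail_cons]
      have hq : q.IsPath := by
        rw [SimpleGraph.Walk.isPath_def, hsupp]
        refine List.Nodup.append ?_ (List.nodup_singleton _) ?_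
        · refine List.Nodup.append hp1.support_nodup hp2.reverse.support_nodup ?_
          intro x hx1 hx2
          rw [SimpleGraph.Walk.support_reverse, List.mem_reverse] at hx2
          have h1 := (hs1 x hx1).1
          have h2 := (hs2 x hx2).2
          omega
        · intro x hx1 hx2
          simp only [List.mem_singleton] at hx2
          subst hx2
          rw [List.mem_append] at hx1
          rcases hx1 with hx | hx
          · have := (hs1 _ hx).2
            simp only at this
            omega
          · rw [SimpleGraph.Walk.support_reverse, List.mem_reverse] at hx
            have := (hs2 _ hx).2
            simp only at this
            omega
      have hql : q.length = 2 ^ (n - 1) := by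
        rw [hq_def, SimpleGraph.Walk.length_concat, SimpleGraph.Walk.length_append,
          SimpleGraph.Walk.length_cons, SimpleGraph.Walk.length_reverse, hl1, hl2]
        omega
      have hmem : (⟨2 ^ (n - 1), hmn⟩ : Fin (2 ^ n)) ∈
          univ.filter (fun v : Fin (2 ^ n) => v ≠ u) := by
        simp only [mem_filter, mem_univ, true_and, ne_eq]
        intro h
        rw [Fin.ext_iff] at h
        simp only at h
        omega
      calc 2 ^ (n - 1) = q.length := hql.symm
        _ ≤ detourDist (Gamma n) u ⟨2 ^ (n - 1), hmn⟩ := le_detourDist q hq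
        _ ≤ _ := Finset.le_sup hmem
    · -- high vertex: path u, 0, 1, …, m-1
      have hb2 : 0 + (2 ^ (n - 1) - 1) < 2 ^ n := by omega
      obtain ⟨p, hp, hl, hsup⟩ :=
        exists_walkSeg n 0 (2 ^ (n - 1) - 1) (by omega) (Nat.two_pow_pos n) hb2
      have hadj : (Gamma n).Adj u ⟨0, Nat.two_pow_pos n⟩ := by
        refine gamma_adj.mpr ⟨?_, Or.inr (Or.inr rfl)⟩
        intro h
        rw [Fin.ext_iff] at h
        simp only at h
        omega
      have hq : (SimpleGraph.Walk.cons hadj p).IsPath := by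
        rw [SimpleGraph.Walk.cons_isPath_iff]
        refine ⟨hp, fun hmem => ?_⟩
        have := (hsup _ hmem).2
        omega
      have hql : (SimpleGraph.Walk.cons hadj p).length = 2 ^ (n - 1) := by
        rw [SimpleGraph.Walk.length_cons, hl]
        omega
      have hmem : (⟨0 + (2 ^ (n - 1) - 1), hb2⟩ : Fin (2 ^ n)) ∈
          univ.filter (fun v : Fin (2 ^ n) => v ≠ u) := by
        simp only [mem_filter, mem_univ, true_and, ne_eq]
        intro h
        rw [Fin.ext_iff] at h
        simp only at h
        omega
      calc 2 ^ (n - 1) = (SimpleGraph.Walk.cons hadj p).length := hql.symm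
        _ ≤ detourDist (Gamma n) u ⟨0 + (2 ^ (n - 1) - 1), hb2⟩ :=
            le_detourDist _ hq
        _ ≤ _ := Finset.le_sup hmem

/-- For every n ≥ 3: in Γ_n the detour eccentricity of 0 is 2^(n-1) − 1, the detour
eccentricity of every other vertex is 2^(n-1), the detour radius is 2^(n-1) − 1 and
the detour diameter is 2^(n-1). -/
theorem stmt_16 (n : ℕ) (hn : 3 ≤ n) :
    detourEcc n ⟨0, Nat.two_pow_pos n⟩ = 2 ^ (n - 1) - 1 ∧
    (∀ u : Fin (2 ^ n), u.val ≠ 0 → detourEcc n u = 2 ^ (n - 1)) ∧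
    sInf (Set.range (detourEcc n)) = 2 ^ (n - 1) - 1 ∧
    sSup (Set.range (detourEcc n)) = 2 ^ (n - 1) := by
  have hm4 : 4 ≤ 2 ^ (n - 1) := by
    calc (4 : ℕ) = 2 ^ 2 := by norm_num
      _ ≤ 2 ^ (n - 1) := Nat.pow_le_pow_right (by norm_num) (by omega)
  have hmn : 2 ^ (n - 1) < 2 ^ n := Nat.pow_lt_pow_right (by norm_num) (by omega)
  have h0 := ecc_zero n hn
  have h1 := ecc_ne n hn
  have hne : (Set.range (detourEcc n)).Nonempty := ⟨_, ⟨⟨0, Nat.two_pow_pos n⟩, rfl⟩⟩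
  refine ⟨h0, h1, ?_, ?_⟩
  · apply le_antisymm
    · rw [← h0]
      exact Nat.sInf_le ⟨⟨0, Nat.two_pow_pos n⟩, rfl⟩
    · apply le_csInf hne
      rintro k ⟨u, rfl⟩
      by_cases hu : u.val = 0
      · rw [show u = ⟨0, Nat.two_pow_pos n⟩ from Fin.ext hu, h0]
      · rw [h1 u hu]
        omega
  · apply le_antisymm
    · apply csSup_le hne
      rintro k ⟨u, rfl⟩
      by_cases hu : u.val = 0
      · rw [show u = ⟨0, Nat.two_pow_pos n⟩ from Fin.ext hu, h0]
        omega
      · rw [h1 u hu]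
    · apply le_csSup (Set.Finite.bddAbove (Set.finite_range _))
      exact ⟨⟨1, by omega⟩, h1 _ (by norm_num)⟩
end
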